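/- For every θ ∈ (0,1] and every n ≥ 1, the fractional moment of the normalized partition function satisfies 𝔼[Z_n^θ] ≤ (ℓ/(ℓ−1))^{1−θ} · r(θ)^n, where r(θ) = (ℓ−1)·𝔼[(e^{-βX}/((ℓ−1)λ_β))^θ]. -/

import Mathlib

open MeasureTheory Real ProbabilityTheory

/-- The Laplace transform `λ_β = 𝔼[e^{-βX}]` of the conductance law. -/
noncomputable def lam {Ω : Type*} [MeasurableSpace Ω] (P : Measure Ω) (X : Ω → ℝ) (β : ℝ) : ℝ :=
  ∫ ω, Real.exp (-β * X ω) ∂P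

/-- The annealed critical point `h_a(β) = log(ℓ-1) + log λ_β`. -/
noncomputable def annealedCP {Ω : Type*} [MeasurableSpace Ω] (P : Measure Ω) (X : Ω → ℝ)
    (ℓ : ℕ) (β : ℝ) : ℝ :=
  Real.log ((ℓ : ℝ) - 1) + Real.log (lam P X β)

/-- A (nonempty) word indexing an edge of the rooted degree-`ℓ` tree: a first letter in
`Fin ℓ` together with a list of subsequent letters in `Fin (ℓ-1)`.  The `n`-step
self-avoiding paths from the root correspond to the words of length `n` (list length
`n-1`), and the edges along such a path are the nonempty prefixes of the word. -/
abbrev TreeWord (ℓ : ℕ) : Type := Fin ℓ × List (Fin (ℓ - 1))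

/-- The normalized partition function
`Z_n = (ℓ(ℓ-1)^{n-1} λ_β^n)⁻¹ Σ_{|w|=n} exp(-β Σ_{k=1}^n X_{(w_1,…,w_k)})`, with `Z_0 = 1`.
The inner sums run over the first letter `a : Fin ℓ` and the tail `g`, and the `k`-th edge
of the path `w = (a, List.ofFn g)` is the prefix `(a, (List.ofFn g).take (k-1))`. -/
noncomputable def Zpart {Ω : Type*} (ℓ : ℕ) (β lamβ : ℝ)
    (Xf : TreeWord ℓ → Ω → ℝ) : ℕ → Ω → ℝ
  | 0 => fun _ => 1
  | n + 1 => fun ω =>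
      ((ℓ : ℝ) * ((ℓ : ℝ) - 1) ^ n * lamβ ^ (n + 1))⁻¹ *
        ∑ a : Fin ℓ, ∑ g : Fin n → Fin (ℓ - 1),
          Real.exp (-β * ∑ k ∈ Finset.range (n + 1), Xf (a, (List.ofFn g).take k) ω)

/-- The fractional-moment rate `r(θ) = (ℓ-1)·𝔼[(e^{-βX}/((ℓ-1)λ_β))^θ]`. -/
noncomputable def rDS {Ω : Type*} [MeasurableSpace Ω] (P : Measure Ω) (X : Ω → ℝ)
    (ℓ : ℕ) (β θ : ℝ) : ℝ :=
  ((ℓ : ℝ) - 1) * ∫ ω, (Real.exp (-β * X ω) / (((ℓ : ℝ) - 1) * lam P X β)) ^ θ ∂P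

lemma my_iIndepFun_precomp {Ω ι κ : Type*} [MeasurableSpace Ω] {P : Measure Ω}
    {β : Type*} [mβ : MeasurableSpace β] {f : ι → Ω → β}
    (h : iIndepFun f P) {e : κ → ι} (he : Function.Injective e) :
    iIndepFun (fun k => f (e k)) P := by
  classical
  rw [iIndepFun_iff_measure_inter_preimage_eq_mul] at h ⊢
  intro S sets hsets
  have H : ∀ i ∈ S.image e,
      MeasurableSet (Function.extend e sets (fun _ => Set.univ) i) := by
    intro i hi
    obtain ⟨k, hk, rfl⟩ := Finset.mem_image.mp hi
    rw [he.extend_apply]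
    exact hsets k hk
  have h' := h (S.image e) H
  rw [Finset.set_biInter_finset_image, Finset.prod_image
    (fun k _ l _ hkl => he hkl)] at h'
  simp only [he.extend_apply] at h'
  exact h'

lemma my_add_rpow_le {a b p : ℝ} (ha : 0 ≤ a) (hb : 0 ≤ b) (hp : 0 ≤ p) (hp1 : p ≤ 1) :
    (a + b) ^ p ≤ a ^ p + b ^ p := by
  lift a to NNReal using ha
  lift b to NNReal using hb
  rw [← NNReal.coe_add, ← NNReal.coe_rpow, ← NNReal.coe_rpow, ← NNReal.coe_rpow,
    ← NNReal.coe_add, NNReal.coe_le_coe]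
  exact NNReal.rpow_add_le_add_rpow a b hp hp1

lemma my_rpow_sum_le {ι : Type*} (s : Finset ι) (f : ι → ℝ) (hf : ∀ i ∈ s, 0 ≤ f i)
    {p : ℝ} (hp : 0 < p) (hp1 : p ≤ 1) :
    (∑ i ∈ s, f i) ^ p ≤ ∑ i ∈ s, f i ^ p := by
  classical
  induction s using Finset.induction_on with
  | empty => simp [Real.zero_rpow hp.ne']
  | insert a s hi ih =>
    rw [Finset.sum_insert hi, Finset.sum_insert hi]
    have h1 : (f a + ∑ i ∈ s, f i) ^ p ≤ f a ^ p + (∑ i ∈ s, f i) ^ p :=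
      my_add_rpow_le (hf a (Finset.mem_insert_self _ _))
        (Finset.sum_nonneg fun i hi' => hf i (Finset.mem_insert_of_mem hi')) hp.le hp1
    exact h1.trans (add_le_add_right (ih fun i hi' => hf i (Finset.mem_insert_of_mem hi')) _)

lemma my_alg (L K A B θ : ℝ) (hL : 0 < L) (hK : 0 < K) (hA : 0 < A) (hB : 0 < B) (m : ℕ) :
    ((L * K ^ m * A ^ (m + 1))⁻¹) ^ θ * (L * (K ^ m * B ^ (m + 1))) =
      (L / K) ^ (1 - θ) * (K * (B / (K * A) ^ θ)) ^ (m + 1) := by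
  obtain ⟨lL, rfl⟩ : ∃ x, exp x = L := ⟨log L, exp_log hL⟩
  obtain ⟨lK, rfl⟩ : ∃ x, exp x = K := ⟨log K, exp_log hK⟩
  obtain ⟨lA, rfl⟩ : ∃ x, exp x = A := ⟨log A, exp_log hA⟩
  obtain ⟨lB, rfl⟩ : ∃ x, exp x = B := ⟨log B, exp_log hB⟩
  rw [div_eq_mul_inv, div_eq_mul_inv]
  simp only [← Real.exp_nat_mul, ← Real.exp_add, ← Real.exp_neg, ← Real.exp_mul,
    ← Real.exp_sub]
  rw [Real.exp_eq_exp]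
  push_cast
  ring

/-- Fractional moment estimate: for `θ ∈ (0,1]` and `n ≥ 1`,
`𝔼[Z_n^θ] ≤ (ℓ/(ℓ-1))^{1-θ} r(θ)^n`. -/
theorem fractional_moment_estimate {Ω : Type*} [MeasurableSpace Ω] (P : Measure Ω)
    [IsProbabilityMeasure P] (ℓ : ℕ) (hℓ : 3 ≤ ℓ) (β : ℝ) (hβ : 0 < β)
    (X : Ω → ℝ) (hX : Measurable X)
    (hInt : Integrable (fun ω => Real.exp (-β * X ω)) P)
    (Xf : TreeWord ℓ → Ω → ℝ) (hXf : ∀ w, Measurable (Xf w))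
    (hindep : iIndepFun Xf P)
    (hident : ∀ w, IdentDistrib (Xf w) X P P)
    (θ : ℝ) (hθ : θ ∈ Set.Ioc (0 : ℝ) 1) (n : ℕ) (hn : 1 ≤ n) :
    ∫ ω, (Zpart ℓ β (lam P X β) Xf n ω) ^ θ ∂P
      ≤ ((ℓ : ℝ) / ((ℓ : ℝ) - 1)) ^ (1 - θ) * (rDS P X ℓ β θ) ^ n := by
  classical
  obtain ⟨hθ0, hθ1⟩ := hθ
  obtain ⟨m, rfl⟩ : ∃ m, n = m + 1 := ⟨n - 1, (Nat.succ_pred_eq_of_pos hn).symm⟩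
  have hL : (0:ℝ) < (ℓ:ℝ) := by
    have : (3:ℝ) ≤ (ℓ:ℝ) := by exact_mod_cast hℓ
    linarith
  have hK : (0:ℝ) < (ℓ:ℝ) - 1 := by
    have : (3:ℝ) ≤ (ℓ:ℝ) := by exact_mod_cast hℓ
    linarith
  set A := lam P X β with hAdef
  have hA : 0 < A := integral_exp_pos hInt
  set t : ℝ := -(β * θ) with htdef
  have hexp_meas : Measurable fun x : ℝ => exp (t * x) := (measurable_id.const_mul t).exp
  have hident' : ∀ w, IdentDistrib (fun ω => exp (t * Xf w ω)) (fun ω => exp (t * X ω)) P P :=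
    fun w => (hident w).comp hexp_meas
  have hIntB : Integrable (fun ω => exp (t * X ω)) P := by
    refine ((integrable_const (1:ℝ)).add hInt).mono'
      (hexp_meas.comp hX).aestronglyMeasurable (ae_of_all _ fun ω => ?_)
    rw [Real.norm_eq_abs, abs_of_pos (exp_pos _)]
    simp only [Pi.add_apply]
    have h1 : t * X ω = (-β * X ω) * θ := by rw [htdef]; ring
    rw [h1, Real.exp_mul]
    rcases le_or_gt (exp (-β * X ω)) 1 with h | h
    · have h2 := Real.rpow_le_one (exp_pos (-β * X ω)).le h hθ0.le
      have h3 := Real.exp_pos (-β * X ω)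
      linarith
    · have h2 : exp (-β * X ω) ^ θ ≤ exp (-β * X ω) ^ (1:ℝ) :=
        Real.rpow_le_rpow_of_exponent_le h.le hθ1
      rw [Real.rpow_one] at h2
      linarith
  set B := ∫ ω, exp (t * X ω) ∂P with hBdef
  have hB : 0 < B := integral_exp_pos hIntB
  have hmgfW : ∀ w, mgf (Xf w) P t = B := fun w => (hident' w).integral_eq
  have key : ∀ (a : Fin ℓ) (g : Fin m → Fin (ℓ - 1)),
      Integrable (fun ω => exp (t * ∑ k ∈ Finset.range (m + 1),
        Xf (a, (List.ofFn g).take k) ω)) P ∧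
      ∫ ω, exp (t * ∑ k ∈ Finset.range (m + 1), Xf (a, (List.ofFn g).take k) ω) ∂P
        = B ^ (m + 1) := by
    intro a g
    set e : Fin (m + 1) → TreeWord ℓ := fun k => (a, (List.ofFn g).take k) with hedef
    have he : Function.Injective e := by
      intro j k h
      have hj := congrArg (fun w : TreeWord ℓ => w.2.length) h
      simp only [hedef, List.length_take, List.length_ofFn] at hj
      have hj1 := j.isLt
      have hk1 := k.isLt
      exact Fin.ext (by omega)
    have hind : iIndepFun (fun k => Xf (e k)) P :=
      my_iIndepFun_precomp hindep he
    have hmeas : ∀ k : Fin (m + 1), Measurable (fun ω => Xf (e k) ω) := fun k => hXf _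
    have hint : ∀ k ∈ (Finset.univ : Finset (Fin (m + 1))),
        Integrable (fun ω => exp (t * Xf (e k) ω)) P :=
      fun k _ => (hident' (e k)).integrable_iff.mpr hIntB
    have hsum : ∀ ω, ∑ k ∈ Finset.range (m + 1), Xf (a, (List.ofFn g).take k) ω
        = (∑ k : Fin (m + 1), fun ω => Xf (e k) ω) ω := by
      intro ω
      rw [Finset.sum_apply]
      exact (Fin.sum_univ_eq_sum_range (fun k => Xf (a, (List.ofFn g).take k) ω) (m + 1)).symm
    have heq : (fun ω => exp (t * (∑ k : Fin (m + 1), fun ω => Xf (e k) ω) ω))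
        = fun ω => exp (t * ∑ k ∈ Finset.range (m + 1), Xf (a, (List.ofFn g).take k) ω) := by
      funext ω; rw [hsum ω]
    constructor
    · have h1 := hind.integrable_exp_mul_sum hmeas hint
      rw [heq] at h1
      exact h1
    · have h1 : ∫ ω, exp (t * ∑ k ∈ Finset.range (m + 1), Xf (a, (List.ofFn g).take k) ω) ∂P
          = mgf (∑ k : Fin (m + 1), fun ω => Xf (e k) ω) P t := by
        simp only [mgf]
        rw [← heq]
      rw [h1, hind.mgf_sum hmeas Finset.univ]
      simp only [hmgfW]
      rw [Finset.prod_const, Finset.card_univ, Fintype.card_fin]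
  set C : ℝ := (ℓ:ℝ) * ((ℓ:ℝ) - 1) ^ m * A ^ (m + 1) with hCdef
  have hC : 0 < C := by rw [hCdef]; positivity
  have hZeq : ∀ ω, Zpart ℓ β A Xf (m + 1) ω
      = C⁻¹ * ∑ a : Fin ℓ, ∑ g : Fin m → Fin (ℓ - 1),
          exp (-β * ∑ k ∈ Finset.range (m + 1), Xf (a, (List.ofFn g).take k) ω) := by
    intro ω
    simp only [Zpart, hCdef]
  have hSnn : ∀ ω, (0:ℝ) ≤ ∑ a : Fin ℓ, ∑ g : Fin m → Fin (ℓ - 1),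
      exp (-β * ∑ k ∈ Finset.range (m + 1), Xf (a, (List.ofFn g).take k) ω) :=
    fun ω => Finset.sum_nonneg fun a _ => Finset.sum_nonneg fun g _ => (exp_pos _).le
  have hZnn : ∀ ω, 0 ≤ Zpart ℓ β A Xf (m + 1) ω := fun ω => by
    rw [hZeq ω]; exact mul_nonneg (inv_nonneg.mpr hC.le) (hSnn ω)
  have hptbound : ∀ ω, (Zpart ℓ β A Xf (m + 1) ω) ^ θ ≤
      C⁻¹ ^ θ * ∑ a : Fin ℓ, ∑ g : Fin m → Fin (ℓ - 1),
        exp (t * ∑ k ∈ Finset.range (m + 1), Xf (a, (List.ofFn g).take k) ω) := by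
    intro ω
    rw [hZeq ω, Real.mul_rpow (inv_nonneg.mpr hC.le) (hSnn ω)]
    refine mul_le_mul_of_nonneg_left ?_ (Real.rpow_nonneg (inv_nonneg.mpr hC.le) θ)
    refine le_trans (my_rpow_sum_le _ _
      (fun a _ => Finset.sum_nonneg fun g _ => (exp_pos _).le) hθ0 hθ1) ?_
    refine Finset.sum_le_sum fun a _ => le_trans
      (my_rpow_sum_le _ _ (fun g _ => (exp_pos _).le) hθ0 hθ1) (le_of_eq ?_)
    refine Finset.sum_congr rfl fun g _ => ?_
    rw [← Real.exp_mul]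
    congr 1
    rw [htdef]; ring
  have hGint : Integrable (fun ω => C⁻¹ ^ θ * ∑ a : Fin ℓ, ∑ g : Fin m → Fin (ℓ - 1),
      exp (t * ∑ k ∈ Finset.range (m + 1), Xf (a, (List.ofFn g).take k) ω)) P := by
    refine Integrable.const_mul ?_ _
    exact integrable_finset_sum _ fun a _ => integrable_finset_sum _ fun g _ => (key a g).1
  have hmono : ∫ ω, (Zpart ℓ β A Xf (m + 1) ω) ^ θ ∂P
      ≤ ∫ ω, C⁻¹ ^ θ * ∑ a : Fin ℓ, ∑ g : Fin m → Fin (ℓ - 1),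
          exp (t * ∑ k ∈ Finset.range (m + 1), Xf (a, (List.ofFn g).take k) ω) ∂P :=
    integral_mono_of_nonneg (ae_of_all _ fun ω => Real.rpow_nonneg (hZnn ω) θ)
      hGint (ae_of_all _ hptbound)
  have hGval : ∫ ω, C⁻¹ ^ θ * ∑ a : Fin ℓ, ∑ g : Fin m → Fin (ℓ - 1),
      exp (t * ∑ k ∈ Finset.range (m + 1), Xf (a, (List.ofFn g).take k) ω) ∂P
      = C⁻¹ ^ θ * ((ℓ:ℝ) * (((ℓ:ℝ) - 1) ^ m * B ^ (m + 1))) := by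
    rw [integral_const_mul]
    congr 1
    rw [integral_finset_sum _ (fun a _ =>
      integrable_finset_sum _ fun g _ => (key a g).1)]
    have h1 : ∀ a : Fin ℓ, ∫ ω, ∑ g : Fin m → Fin (ℓ - 1),
        exp (t * ∑ k ∈ Finset.range (m + 1), Xf (a, (List.ofFn g).take k) ω) ∂P
        = ∑ _g : Fin m → Fin (ℓ - 1), B ^ (m + 1) := by
      intro a
      rw [integral_finset_sum _ fun g _ => (key a g).1]
      exact Finset.sum_congr rfl fun g _ => (key a g).2
    rw [Finset.sum_congr rfl fun a _ => h1 a]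
    rw [Finset.sum_const, Finset.sum_const, Finset.card_univ, Finset.card_univ,
      Fintype.card_fun, nsmul_eq_mul, nsmul_eq_mul]
    simp only [Fintype.card_fin]
    push_cast [Nat.cast_sub (show 1 ≤ ℓ by omega)]
    ring
  have hrds : rDS P X ℓ β θ = ((ℓ:ℝ) - 1) * (B / (((ℓ:ℝ) - 1) * A) ^ θ) := by
    rw [rDS]
    congr 1
    have hpt : ∀ ω, (exp (-β * X ω) / (((ℓ:ℝ) - 1) * lam P X β)) ^ θ
        = exp (t * X ω) / (((ℓ:ℝ) - 1) * A) ^ θ := by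
      intro ω
      rw [← hAdef, Real.div_rpow (exp_pos _).le (mul_nonneg hK.le hA.le)]
      congr 1
      rw [← Real.exp_mul]
      congr 1
      rw [htdef]; ring
    simp_rw [hpt]
    rw [integral_div, ← hBdef]
  refine (hmono.trans (le_of_eq hGval)).trans (le_of_eq ?_)
  rw [hrds, hCdef]
  exact my_alg _ _ _ _ _ hL hK hA hB m
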